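/- Let n ≥ 2, A > 0, α ≥ 0, R > 0, y₀ ∈ ℝⁿ, and let β satisfy n+1 ≤ β < n + α; set b = β/(n+α) ∈ (0,1). Then there exists M > 0 (depending only on A, b, R, α, n and β) such that the function W(x) = −M·(R² − |x − y₀|²)^b satisfies det D²W(x) ≤ A·(R − |x − y₀|)^{β−n−1}·|W(x)|^{−α} at every x ∈ B_R(y₀). -/

import Mathlib

/-- The determinant of the Hessian matrix of `u` at `x`. -/
noncomputable def hessianDet {n : ℕ} (u : EuclideanSpace ℝ (Fin n) → ℝ)
    (x : EuclideanSpace ℝ (Fin n)) : ℝ :=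
  (Matrix.of fun i j : Fin n =>
    iteratedFDeriv ℝ 2 u x ![EuclideanSpace.single i (1 : ℝ), EuclideanSpace.single j (1 : ℝ)]).det


open scoped RealInnerProductSpace

/-- The real inner product on Euclidean space, as a continuous bilinear map. -/
noncomputable def innerCLM (n : ℕ) :
    EuclideanSpace ℝ (Fin n) →L[ℝ] EuclideanSpace ℝ (Fin n) →L[ℝ] ℝ := innerSL ℝ

variable {n : ℕ}

lemma innerCLM_apply (v w : EuclideanSpace ℝ (Fin n)) : innerCLM n v w = ⟪v, w⟫ := rfl

lemma hasFDerivAt_W (M R b : ℝ) (y₀ y : EuclideanSpace ℝ (Fin n))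
    (hq : 0 < R ^ 2 - ‖y - y₀‖ ^ 2) :
    HasFDerivAt (fun y : EuclideanSpace ℝ (Fin n) => -M * (R ^ 2 - ‖y - y₀‖ ^ 2) ^ b)
      ((2 * M * b * (R ^ 2 - ‖y - y₀‖ ^ 2) ^ (b - 1)) • (innerCLM n (y - y₀))) y := by
  have h1 : HasFDerivAt (fun y : EuclideanSpace ℝ (Fin n) => ‖y - y₀‖ ^ 2)
      (2 • (innerSL ℝ (y - y₀))) y := by
    simpa using ((hasFDerivAt_id y).sub_const y₀).norm_sq
  have h2 : HasFDerivAt (fun y : EuclideanSpace ℝ (Fin n) => R ^ 2 - ‖y - y₀‖ ^ 2)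
      (-(2 • (innerSL ℝ (y - y₀)))) y := by
    exact ((hasFDerivAt_const (R ^ 2) y).sub h1).congr_fderiv (zero_sub _)
  have h3 : HasDerivAt (fun t : ℝ => t ^ b)
      (b * (R ^ 2 - ‖y - y₀‖ ^ 2) ^ (b - 1)) (R ^ 2 - ‖y - y₀‖ ^ 2) :=
    Real.hasDerivAt_rpow_const (Or.inl hq.ne')
  have h4 := (h3.comp_hasFDerivAt y h2).const_mul (-M)
  refine h4.congr_fderiv ?_
  symm
  ext v
  simp only [ContinuousLinearMap.smul_apply, ContinuousLinearMap.neg_apply, smul_eq_mul,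
    innerCLM_apply]
  show _ * (inner ℝ (y - y₀) v) = _
  ring_nf
  rfl

/-- Derivative of the first-derivative field `Φ`. -/
lemma hasFDerivAt_Phi (M R b : ℝ) (y₀ x : EuclideanSpace ℝ (Fin n))
    (hq : 0 < R ^ 2 - ‖x - y₀‖ ^ 2) :
    HasFDerivAt (fun y : EuclideanSpace ℝ (Fin n) =>
        (2 * M * b * (R ^ 2 - ‖y - y₀‖ ^ 2) ^ (b - 1)) • (innerCLM n (y - y₀)))
      ((2 * M * b * (R ^ 2 - ‖x - y₀‖ ^ 2) ^ (b - 1)) • (innerCLM n)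
        + (((-(4 * M * b * (b - 1) * (R ^ 2 - ‖x - y₀‖ ^ 2) ^ (b - 2)))
            • (innerSL ℝ (x - y₀))).smulRight (innerCLM n (x - y₀)))) x := by
  have h1 : HasFDerivAt (fun y : EuclideanSpace ℝ (Fin n) => ‖y - y₀‖ ^ 2)
      (2 • (innerSL ℝ (x - y₀))) x := by
    simpa using ((hasFDerivAt_id x).sub_const y₀).norm_sq
  have h2 : HasFDerivAt (fun y : EuclideanSpace ℝ (Fin n) => R ^ 2 - ‖y - y₀‖ ^ 2)
      (-(2 • (innerSL ℝ (x - y₀)))) x := by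
    exact ((hasFDerivAt_const (R ^ 2) x).sub h1).congr_fderiv (zero_sub _)
  have h3 : HasDerivAt (fun t : ℝ => t ^ (b - 1))
      ((b - 1) * (R ^ 2 - ‖x - y₀‖ ^ 2) ^ (b - 1 - 1)) (R ^ 2 - ‖x - y₀‖ ^ 2) :=
    Real.hasDerivAt_rpow_const (Or.inl hq.ne')
  have hc : HasFDerivAt (fun y : EuclideanSpace ℝ (Fin n) =>
      2 * M * b * (R ^ 2 - ‖y - y₀‖ ^ 2) ^ (b - 1))
      ((-(4 * M * b * (b - 1) * (R ^ 2 - ‖x - y₀‖ ^ 2) ^ (b - 2))) • (innerSL ℝ (x - y₀))) x := by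
    have h4 := (h3.comp_hasFDerivAt x h2).const_mul (2 * M * b)
    refine h4.congr_fderiv ?_
    symm
    ext v
    simp only [ContinuousLinearMap.smul_apply, ContinuousLinearMap.neg_apply, smul_eq_mul]
    have : b - 1 - 1 = b - 2 := by ring
    rw [this]
    ring
  have hL : HasFDerivAt (fun y : EuclideanSpace ℝ (Fin n) => innerCLM n (y - y₀))
      (innerCLM n) x := by
    have h := (innerCLM n).hasFDerivAt.comp x ((hasFDerivAt_id x).sub_const y₀)
    have : (innerCLM n).comp (ContinuousLinearMap.id ℝ _) = innerCLM n :=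
      ContinuousLinearMap.comp_id _
    rw [this] at h
    exact h
  exact hc.smul hL

lemma hessian_entry (M R b : ℝ) (y₀ x : EuclideanSpace ℝ (Fin n))
    (hx : ‖x - y₀‖ < R) (u v : EuclideanSpace ℝ (Fin n)) :
    iteratedFDeriv ℝ 2 (fun y : EuclideanSpace ℝ (Fin n) =>
        -M * (R ^ 2 - ‖y - y₀‖ ^ 2) ^ b) x ![u, v]
      = (2 * M * b * (R ^ 2 - ‖x - y₀‖ ^ 2) ^ (b - 1)) * ⟪u, v⟫
        + (-(4 * M * b * (b - 1) * (R ^ 2 - ‖x - y₀‖ ^ 2) ^ (b - 2)))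
          * ⟪x - y₀, u⟫ * ⟪x - y₀, v⟫ := by
  have hR : (0:ℝ) ≤ R := le_trans (norm_nonneg _) hx.le
  have hq : ∀ y : EuclideanSpace ℝ (Fin n), ‖y - y₀‖ < R → 0 < R ^ 2 - ‖y - y₀‖ ^ 2 := by
    intro y hy
    have := pow_lt_pow_left₀ hy (norm_nonneg _) two_ne_zero
    linarith
  have hopen : IsOpen {y : EuclideanSpace ℝ (Fin n) | ‖y - y₀‖ < R} := by
    have : {y : EuclideanSpace ℝ (Fin n) | ‖y - y₀‖ < R} = Metric.ball y₀ R := by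
      ext y; simp [Metric.mem_ball, dist_eq_norm]
    rw [this]; exact Metric.isOpen_ball
  have hmem : {y : EuclideanSpace ℝ (Fin n) | ‖y - y₀‖ < R} ∈ nhds x :=
    hopen.mem_nhds hx
  have heq : (fderiv ℝ (fun y : EuclideanSpace ℝ (Fin n) =>
      -M * (R ^ 2 - ‖y - y₀‖ ^ 2) ^ b)) =ᶠ[nhds x]
      (fun y => (2 * M * b * (R ^ 2 - ‖y - y₀‖ ^ 2) ^ (b - 1)) • (innerCLM n (y - y₀))) := by
    filter_upwards [hmem] with y hy
    exact (hasFDerivAt_W M R b y₀ y (hq y hy)).fderiv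
  rw [iteratedFDeriv_two_apply, heq.fderiv_eq, (hasFDerivAt_Phi M R b y₀ x (hq x hx)).fderiv]
  simp only [Matrix.cons_val_zero, Matrix.cons_val_one, Matrix.head_cons,
    ContinuousLinearMap.add_apply, ContinuousLinearMap.smul_apply,
    ContinuousLinearMap.smulRight_apply, ContinuousLinearMap.neg_apply, smul_eq_mul,
    innerCLM_apply, innerSL_apply_apply]

lemma det_smul_one_add_outer {n : ℕ} (hn : 1 ≤ n) (c1 c2 : ℝ) (hc1 : c1 ≠ 0) (z : Fin n → ℝ) :
    (Matrix.of fun i j : Fin n =>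
        c1 * (if i = j then 1 else 0) + c2 * (z i * z j)).det
      = c1 ^ (n - 1) * (c1 + c2 * ∑ i, z i * z i) := by
  have hfact : (Matrix.of fun i j : Fin n =>
      c1 * (if i = j then 1 else 0) + c2 * (z i * z j))
      = c1 • (1 + Matrix.replicateCol (Fin 1) (fun i => (c2 / c1) * z i) * Matrix.replicateRow (Fin 1) z) := by
    ext i j
    simp only [Matrix.of_apply, Matrix.smul_apply, Matrix.add_apply, Matrix.one_apply,
      Matrix.mul_apply, Matrix.replicateCol_apply, Matrix.replicateRow_apply, Finset.univ_unique,
      Finset.sum_singleton, smul_eq_mul]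
    by_cases h : i = j <;> field_simp <;> ring
  obtain ⟨m, rfl⟩ := Nat.exists_eq_add_of_le hn
  rw [hfact, Matrix.det_smul]
  erw [Matrix.det_one_add_replicateCol_mul_replicateRow]
  simp only [dotProduct, Fintype.card_fin]
  have : ∑ i, z i * ((c2 / c1) * z i) = (c2 / c1) * ∑ i, z i * z i := by
    rw [Finset.mul_sum]; congr 1; ext i; ring
  rw [this]
  field_simp
  rw [Nat.add_sub_cancel_left]
  ring

lemma key_ineq (n : ℕ) (hn : 2 ≤ n) (A α R β b M r : ℝ) (hA : 0 < A) (hα : 0 ≤ α) (hR : 0 < R)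
    (hβ : (n : ℝ) + 1 ≤ β) (hβ' : β < n + α) (hb : b = β / ((n : ℝ) + α))
    (hM0 : 0 < M) (hM1 : M ≤ 1)
    (hMC : M * ((2 * b) ^ n * 3 * R ^ 2 * (2 * R) ^ (β - n - 1)) ≤ A)
    (hr0 : 0 ≤ r) (hr : r < R) :
    (2 * M * b * (R ^ 2 - r ^ 2) ^ (b - 1)) ^ (n - 1)
        * (2 * M * b * (R ^ 2 - r ^ 2) ^ (b - 1)
          + (-(4 * M * b * (b - 1) * (R ^ 2 - r ^ 2) ^ (b - 2))) * r ^ 2)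
      ≤ A * (R - r) ^ (β - n - 1) * (M * (R ^ 2 - r ^ 2) ^ b) ^ (-α) := by
  set N : ℝ := (n : ℝ) with hN
  have hN2 : (2:ℝ) ≤ N := by rw [hN]; exact_mod_cast hn
  have hnα : 0 < N + α := by linarith
  have hβb : b * (N + α) = β := by rw [hb]; field_simp
  have hb0 : 0 < b := by
    rw [hb]; apply div_pos _ hnα; linarith
  have hb1 : b < 1 := by
    rw [hb]; rw [div_lt_one hnα]; exact hβ'
  have hρ : 0 < R ^ 2 - r ^ 2 := by nlinarith
  set ρ : ℝ := R ^ 2 - r ^ 2 with hρdef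
  have he : 0 ≤ β - N - 1 := by linarith
  set e : ℝ := β - N - 1 with hedef
  -- Step A
  have hsplit : ρ ^ (b - 1) = ρ ^ (b - 2) * ρ := by
    have h : b - 1 = (b - 2) + 1 := by ring
    rw [h, Real.rpow_add_one hρ.ne']
  have hA1 : 2 * M * b * ρ ^ (b - 1) + (-(4 * M * b * (b - 1) * ρ ^ (b - 2))) * r ^ 2
      ≤ 2 * M * b * ρ ^ (b - 2) * (3 * R ^ 2) := by
    rw [hsplit]
    have h1 : 2 * M * b * (ρ ^ (b - 2) * ρ) + -(4 * M * b * (b - 1) * ρ ^ (b - 2)) * r ^ 2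
        = 2 * M * b * ρ ^ (b - 2) * (ρ + 2 * (1 - b) * r ^ 2) := by ring
    rw [h1]
    apply mul_le_mul_of_nonneg_left _ (by positivity)
    nlinarith [Real.rpow_nonneg hρ.le (b-2), sq_nonneg r]
  have hc1 : 0 < 2 * M * b * ρ ^ (b - 1) := by positivity
  -- combine
  obtain ⟨m, rfl⟩ : ∃ m, n = m + 2 := ⟨n - 2, by omega⟩
  have hcard : ((m : ℝ) + 2) = N := by push_cast [hN]; ring
  have step1 : (2 * M * b * ρ ^ (b - 1)) ^ (m + 2 - 1)
      * (2 * M * b * ρ ^ (b - 1) + (-(4 * M * b * (b - 1) * ρ ^ (b - 2))) * r ^ 2)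
      ≤ (2 * M * b * ρ ^ (b - 1)) ^ (m + 1) * (2 * M * b * ρ ^ (b - 2) * (3 * R ^ 2)) := by
    exact mul_le_mul_of_nonneg_left hA1 (by positivity)
  -- rewrite the middle quantity
  have hmid : (2 * M * b * ρ ^ (b - 1)) ^ (m + 1) * (2 * M * b * ρ ^ (b - 2) * (3 * R ^ 2))
      = (2 * M * b) ^ (m + 2) * (3 * R ^ 2) * ρ ^ ((b - 1) * ((m:ℝ) + 1) + (b - 2)) := by
    rw [mul_pow, ← Real.rpow_natCast (ρ ^ (b - 1)) (m + 1), ← Real.rpow_mul hρ.le,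
      Real.rpow_add hρ]
    push_cast
    ring
  -- exponent identity
  have hexp : (b - 1) * ((m:ℝ) + 1) + (b - 2) = e + (-(b * α)) := by
    rw [hedef]
    have hm : (m : ℝ) + 1 = N - 1 := by rw [← hcard]; ring
    rw [hm]
    linear_combination hβb
  have hmid2 : ρ ^ ((b - 1) * ((m:ℝ) + 1) + (b - 2)) = ρ ^ e * ρ ^ (-(b * α)) := by
    rw [hexp, Real.rpow_add hρ]
  -- bound ρ^e
  have hρe : ρ ^ e ≤ (R - r) ^ e * (2 * R) ^ e := by
    rw [← Real.mul_rpow (by linarith) (by linarith)]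
    apply Real.rpow_le_rpow hρ.le _ he
    nlinarith
  -- scalar inequality: M^(m+2) * C ≤ A * M^(-α)
  have hMα : (0:ℝ) < M ^ α := Real.rpow_pos_of_pos hM0 α
  have hCpos : (0:ℝ) < (2 * b) ^ (m + 2) * 3 * R ^ 2 * (2 * R) ^ e := by positivity
  have hscal : (2 * M * b) ^ (m + 2) * (3 * R ^ 2) * (2 * R) ^ e ≤ A * M ^ (-α) := by
    rw [Real.rpow_neg hM0.le, ← div_eq_mul_inv A, le_div_iff₀ hMα]
    have h1 : (2 * M * b) ^ (m + 2) * (3 * R ^ 2) * (2 * R) ^ e * M ^ α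
        = (M ^ (m + 2) * M ^ α) * ((2 * b) ^ (m + 2) * 3 * R ^ 2 * (2 * R) ^ e) := by
      rw [show (2 * M * b) ^ (m + 2) = M ^ (m + 2) * (2 * b) ^ (m + 2) by
        rw [← mul_pow]; ring_nf]
      ring
    rw [h1]
    have h2 : M ^ (m + 2) * M ^ α = M ^ (((m : ℝ) + 2) + α) := by
      rw [← Real.rpow_natCast M (m + 2), ← Real.rpow_add hM0]
      push_cast
      ring_nf
    have h3 : M ^ (((m : ℝ) + 2) + α) ≤ M := by
      calc M ^ (((m : ℝ) + 2) + α) ≤ M ^ (1:ℝ) :=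
            Real.rpow_le_rpow_of_exponent_ge hM0 hM1 (by push_cast; linarith)
        _ = M := Real.rpow_one M
    calc M ^ (m + 2) * M ^ α * ((2 * b) ^ (m + 2) * 3 * R ^ 2 * (2 * R) ^ e)
        ≤ M * ((2 * b) ^ (m + 2) * 3 * R ^ 2 * (2 * R) ^ e) := by
          apply mul_le_mul_of_nonneg_right _ hCpos.le
          rw [h2]; exact h3
      _ ≤ A := hMC
  -- RHS rewriting
  have hRHS : (M * ρ ^ b) ^ (-α) = M ^ (-α) * ρ ^ (-(b * α)) := by
    rw [Real.mul_rpow hM0.le (Real.rpow_nonneg hρ.le b), ← Real.rpow_mul hρ.le, mul_neg]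
  calc (2 * M * b * ρ ^ (b - 1)) ^ (m + 2 - 1)
        * (2 * M * b * ρ ^ (b - 1) + (-(4 * M * b * (b - 1) * ρ ^ (b - 2))) * r ^ 2)
      ≤ (2 * M * b) ^ (m + 2) * (3 * R ^ 2) * ρ ^ ((b - 1) * ((m:ℝ) + 1) + (b - 2)) :=
        step1.trans_eq hmid
    _ = (2 * M * b) ^ (m + 2) * (3 * R ^ 2) * (ρ ^ e * ρ ^ (-(b * α))) := by rw [hmid2]
    _ ≤ (2 * M * b) ^ (m + 2) * (3 * R ^ 2) * (((R - r) ^ e * (2 * R) ^ e) * ρ ^ (-(b * α))) := by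
        apply mul_le_mul_of_nonneg_left
          (mul_le_mul_of_nonneg_right hρe (Real.rpow_nonneg hρ.le _)) (by positivity)
    _ = ((2 * M * b) ^ (m + 2) * (3 * R ^ 2) * (2 * R) ^ e) * ((R - r) ^ e * ρ ^ (-(b * α))) := by
        ring
    _ ≤ (A * M ^ (-α)) * ((R - r) ^ e * ρ ^ (-(b * α))) := by
        apply mul_le_mul_of_nonneg_right hscal
        have h4 : (0:ℝ) ≤ (R - r) ^ e := Real.rpow_nonneg (by linarith) _
        have h5 : (0:ℝ) ≤ ρ ^ (-(b * α)) := Real.rpow_nonneg hρ.le _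
        positivity
    _ = A * (R - r) ^ e * (M * ρ ^ b) ^ (-α) := by rw [hRHS]; ring

/-- For `n+1 ≤ β < n+α` and `b = β/(n+α)`, there is `M > 0` such that
`W(x) = -M (R² - |x-y₀|²)^b` satisfies
`det D²W ≤ A (R - |x-y₀|)^{β-n-1} |W|^{-α}` on `B_R(y₀)` (a supersolution). -/

theorem exists_supersolution_ball
    (n : ℕ) (hn : 2 ≤ n) (A α R β b : ℝ) (hA : 0 < A) (hα : 0 ≤ α) (hR : 0 < R)
    (y₀ : EuclideanSpace ℝ (Fin n))
    (hβ : (n : ℝ) + 1 ≤ β) (hβ' : β < n + α) (hb : b = β / ((n : ℝ) + α)) :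
    ∃ M : ℝ, 0 < M ∧
      ∀ x ∈ Metric.ball y₀ R,
        hessianDet (fun y : EuclideanSpace ℝ (Fin n) =>
            -M * (R ^ 2 - ‖y - y₀‖ ^ 2) ^ b) x
          ≤ A * (R - ‖x - y₀‖) ^ (β - n - 1) * |-M * (R ^ 2 - ‖x - y₀‖ ^ 2) ^ b| ^ (-α) := by
  have hnα : 0 < (n : ℝ) + α := by
    have : (2:ℝ) ≤ (n:ℝ) := by exact_mod_cast hn
    linarith
  have hb0 : 0 < b := by
    rw [hb]
    apply div_pos _ hnα
    have : (2:ℝ) ≤ (n:ℝ) := by exact_mod_cast hn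
    linarith
  set C : ℝ := (2 * b) ^ n * 3 * R ^ 2 * (2 * R) ^ (β - n - 1) with hCdef
  have hC : 0 < C := by
    have h2R : (0:ℝ) < (2 * R) ^ (β - n - 1) := Real.rpow_pos_of_pos (by linarith) _
    positivity
  refine ⟨min 1 (A / C), lt_min one_pos (div_pos hA hC), ?_⟩
  set M : ℝ := min 1 (A / C) with hMdef
  have hM0 : 0 < M := lt_min one_pos (div_pos hA hC)
  have hM1 : M ≤ 1 := min_le_left _ _
  have hMC : M * C ≤ A := by
    calc M * C ≤ (A / C) * C :=
          mul_le_mul_of_nonneg_right (min_le_right _ _) hC.le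
      _ = A := div_mul_cancel₀ A hC.ne'
  intro x hx
  rw [Metric.mem_ball, dist_eq_norm] at hx
  have hρ : 0 < R ^ 2 - ‖x - y₀‖ ^ 2 := by
    have h := pow_lt_pow_left₀ hx (norm_nonneg _) two_ne_zero
    linarith
  -- compute the Hessian matrix
  unfold hessianDet
  have hmat : (Matrix.of fun i j : Fin n =>
      iteratedFDeriv ℝ 2 (fun y : EuclideanSpace ℝ (Fin n) =>
        -M * (R ^ 2 - ‖y - y₀‖ ^ 2) ^ b) x
        ![EuclideanSpace.single i (1 : ℝ), EuclideanSpace.single j (1 : ℝ)])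
      = Matrix.of (fun i j : Fin n =>
          (2 * M * b * (R ^ 2 - ‖x - y₀‖ ^ 2) ^ (b - 1)) * (if i = j then 1 else 0)
          + (-(4 * M * b * (b - 1) * (R ^ 2 - ‖x - y₀‖ ^ 2) ^ (b - 2)))
            * ((x - y₀) i * (x - y₀) j)) := by
    ext i j
    rw [Matrix.of_apply, hessian_entry M R b y₀ x hx]
    rw [EuclideanSpace.inner_single_left, EuclideanSpace.inner_single_right,
      EuclideanSpace.inner_single_right]
    simp only [map_one, one_mul, EuclideanSpace.single_apply, starRingEnd_apply, star_trivial,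
      Matrix.of_apply]
    ring
  rw [hmat]
  have hc1 : (2 * M * b * (R ^ 2 - ‖x - y₀‖ ^ 2) ^ (b - 1)) ≠ 0 := by
    have : (0:ℝ) < (R ^ 2 - ‖x - y₀‖ ^ 2) ^ (b - 1) := Real.rpow_pos_of_pos hρ _
    positivity
  rw [det_smul_one_add_outer (by omega) _ _ hc1]
  have hsum : ∑ i, (x - y₀) i * (x - y₀) i = ‖x - y₀‖ ^ 2 := by
    rw [← real_inner_self_eq_norm_sq]
    rw [PiLp.inner_apply]
    simp [RCLike.inner_apply]
    exact Finset.sum_congr rfl (fun i _ => (sq _).symm)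
  rw [hsum]
  have habs : |-M * (R ^ 2 - ‖x - y₀‖ ^ 2) ^ b| = M * (R ^ 2 - ‖x - y₀‖ ^ 2) ^ b := by
    rw [neg_mul, abs_neg, abs_of_pos]
    exact mul_pos hM0 (Real.rpow_pos_of_pos hρ _)
  rw [habs]
  exact key_ineq n hn A α R β b M (‖x - y₀‖) hA hα hR hβ hβ' hb hM0 hM1 hMC
    (norm_nonneg _) hx
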